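/- arXiv:2306.04182 — 7 statements merged into one kernel-verified Lean document; each statement's English description precedes it below -/
import Mathlib

section
/- Let R be a norm on R^p and let M ⊆ M̄ be subspaces of R^p such that R is decomposable with respect to (M, M̄^⊥), i.e., R(θ + γ) = R(θ) + R(γ) for all θ ∈ M and γ ∈ M̄^⊥. Then for any θ* ∈ M and any Δ ∈ R^p, R(θ* + Δ) - R(θ*) ≥ R(Δ_{M̄^⊥}) - R(Δ_{M̄}), where Δ_{M̄} and Δ_{M̄^⊥} denote the orthogonal projections of Δ onto M̄ and M̄^⊥ respectively. -/
open scoped RealInnerProductSpace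

/-- Decomposable regularizers satisfy the key lower bound:
`R(θ* + Δ) - R(θ*) ≥ R(Δ_{M̄ᗮ}) - R(Δ_{M̄})` for `θ* ∈ M`. -/
theorem stmt0 {p : ℕ} (R : EuclideanSpace ℝ (Fin p) → ℝ)
    (hR_nonneg : ∀ x, 0 ≤ R x)
    (hR_add : ∀ x y, R (x + y) ≤ R x + R y)
    (hR_smul : ∀ (c : ℝ) (x : EuclideanSpace ℝ (Fin p)), R (c • x) = |c| * R x)
    (hR_def : ∀ x, R x = 0 → x = 0)
    (M Mbar : Submodule ℝ (EuclideanSpace ℝ (Fin p)))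
    (hMM : M ≤ Mbar)
    (hdecomp : ∀ θ ∈ M, ∀ γ ∈ Mbarᗮ, R (θ + γ) = R θ + R γ)
    (θs : EuclideanSpace ℝ (Fin p)) (hθs : θs ∈ M)
    (Δ : EuclideanSpace ℝ (Fin p)) :
    R ((Submodule.orthogonalProjectionOnto Mbarᗮ Δ : EuclideanSpace ℝ (Fin p)))
      - R ((Submodule.orthogonalProjectionOnto Mbar Δ : EuclideanSpace ℝ (Fin p)))
      ≤ R (θs + Δ) - R θs := by
  set a : EuclideanSpace ℝ (Fin p) := (Submodule.orthogonalProjectionOnto Mbar Δ : EuclideanSpace ℝ (Fin p)) with ha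
  set b : EuclideanSpace ℝ (Fin p) := (Submodule.orthogonalProjectionOnto Mbarᗮ Δ : EuclideanSpace ℝ (Fin p)) with hb
  have hsum : a + b = Δ := Mbar.starProjection_add_starProjection_orthogonal Δ
  have hdec : R (θs + b) = R θs + R b :=
    hdecomp θs hθs b (Submodule.orthogonalProjectionOnto Mbarᗮ Δ).2
  have htri : R (θs + b) ≤ R (θs + Δ) + R a := by
    have : θs + b = (θs + Δ) + (-1 : ℝ) • a := by
      rw [← hsum]; module
    rw [this]
    calc R ((θs + Δ) + (-1 : ℝ) • a) ≤ R (θs + Δ) + R ((-1 : ℝ) • a) := hR_add _ _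
      _ = R (θs + Δ) + R a := by rw [hR_smul]; norm_num
  linarith
end

section
/- Let L : R^p → R be convex and differentiable, let R be a norm decomposable with respect to (M, M̄^⊥), and let R* denote its dual norm. Suppose θ̂ minimizes θ ↦ L(θ) + λR(θ) over R^p with λ ≥ 2 R*(∇L(θ*)). Then the error Δ = θ̂ − θ* satisfies R(Δ_{M̄^⊥}) ≤ 3 R(Δ_{M̄}) + 4 R(θ*_{M^⊥}), where subscripts denote orthogonal projections onto the indicated subspaces. -/
open scoped RealInnerProductSpace

lemma grad_convex_ineq {p : ℕ} (L : EuclideanSpace ℝ (Fin p) → ℝ)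
    (hc : ConvexOn ℝ Set.univ L) (hd : Differentiable ℝ L)
    (x y : EuclideanSpace ℝ (Fin p)) :
    L x + ⟪gradient L x, y - x⟫ ≤ L y := by
  have hF : HasFDerivAt L ((InnerProductSpace.toDual ℝ _) (gradient L x)) x :=
    hasGradientAt_iff_hasFDerivAt.mp (hd x).hasGradientAt
  have hline : HasDerivAt (fun t : ℝ => x + t • (y - x)) (y - x) 0 := by
    simpa using ((hasDerivAt_id (0:ℝ)).smul_const (y - x)).const_add x
  have hF' : HasFDerivAt L ((InnerProductSpace.toDual ℝ _) (gradient L x))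
      (x + (0:ℝ) • (y - x)) := by simpa using hF
  have hg : HasDerivAt (fun t : ℝ => L (x + t • (y - x))) ⟪gradient L x, y - x⟫ 0 := by
    simpa [InnerProductSpace.toDual_apply_apply, Function.comp_def] using hF'.comp_hasDerivAt 0 hline
  have hco : ConvexOn ℝ Set.univ (fun t : ℝ => L (x + t • (y - x))) := by
    have h := hc.comp_affineMap (AffineMap.lineMap x y : ℝ →ᵃ[ℝ] _)
    have he : (L ∘ (AffineMap.lineMap x y : ℝ →ᵃ[ℝ] _)) = fun t : ℝ => L (x + t • (y - x)) := by
      funext t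
      simp [Function.comp, AffineMap.lineMap_apply, add_comm]
    rw [Set.preimage_univ, he] at h
    exact h
  have hs := hco.le_slope_of_hasDerivAt (Set.mem_univ (0:ℝ)) (Set.mem_univ (1:ℝ))
      zero_lt_one hg
  have e1 : x + (1:ℝ) • (y - x) = y := by rw [one_smul]; abel
  have e0 : x + (0:ℝ) • (y - x) = x := by rw [zero_smul, add_zero]
  rw [slope_def_field] at hs
  simp only [e0, e1, sub_zero, div_one] at hs
  linarith


lemma dual_bound {p : ℕ} (R : EuclideanSpace ℝ (Fin p) → ℝ)
    (hR_nonneg : ∀ x, 0 ≤ R x)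
    (hR_add : ∀ x y, R (x + y) ≤ R x + R y)
    (hR_smul : ∀ (c : ℝ) (x : EuclideanSpace ℝ (Fin p)), R (c • x) = |c| * R x)
    (hR_def : ∀ x, R x = 0 → x = 0)
    (g w : EuclideanSpace ℝ (Fin p)) :
    ⟪w, g⟫ ≤ sSup {y | ∃ u, R u ≤ 1 ∧ y = ⟪u, g⟫} * R w := by
  have hR0 : R 0 = 0 := by
    have := hR_smul 0 0
    simpa using this
  rcases eq_or_ne w 0 with rfl | hw
  · simp [hR0]
  · have hRw : 0 < R w := (hR_nonneg w).lt_of_ne fun h => hw (hR_def w h.symm)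
    -- upper Lipschitz bound for R
    set C : ℝ := ∑ i : Fin p, R (EuclideanSpace.single i (1:ℝ)) with hC
    have hC0 : 0 ≤ C := Finset.sum_nonneg fun i _ => hR_nonneg _
    have hbound : ∀ z : EuclideanSpace ℝ (Fin p), R z ≤ C * ‖z‖ := by
      intro z
      have hz : ∑ i : Fin p, z i • EuclideanSpace.single i (1:ℝ) = z := by
        have := (EuclideanSpace.basisFun (Fin p) ℝ).sum_repr z
        simpa [EuclideanSpace.basisFun_apply, EuclideanSpace.basisFun_repr] using this
      calc R z = R (∑ i : Fin p, z i • EuclideanSpace.single i (1:ℝ)) := by rw [hz]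
        _ ≤ ∑ i : Fin p, R (z i • EuclideanSpace.single i (1:ℝ)) :=
            Finset.le_sum_of_subadditive R hR0.le hR_add _ _
        _ ≤ ∑ i : Fin p, ‖z‖ * R (EuclideanSpace.single i (1:ℝ)) := by
            refine Finset.sum_le_sum fun i _ => ?_
            rw [hR_smul]
            refine mul_le_mul_of_nonneg_right ?_ (hR_nonneg _)
            have h1 : |z i| = |⟪EuclideanSpace.single i (1:ℝ), z⟫| := by
              rw [EuclideanSpace.inner_single_left]; simp
            have h2 := abs_real_inner_le_norm (EuclideanSpace.single i (1:ℝ)) z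
            rw [EuclideanSpace.norm_single] at h2
            simpa [h1] using h2
        _ = C * ‖z‖ := by rw [← Finset.mul_sum, mul_comm]
    have hcont : Continuous R := by
      have hlip : LipschitzWith (Real.toNNReal C) R := by
        refine LipschitzWith.of_dist_le_mul fun a b => ?_
        rw [Real.dist_eq, dist_eq_norm, Real.coe_toNNReal _ hC0]
        have h1 : R a - R b ≤ C * ‖a - b‖ := by
          have := hR_add (a - b) b
          simp only [sub_add_cancel] at this
          linarith [hbound (a - b)]
        have h2 : R b - R a ≤ C * ‖a - b‖ := by
          have := hR_add (b - a) a
          simp only [sub_add_cancel] at this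
          have h3 : ‖b - a‖ = ‖a - b‖ := norm_sub_rev _ _
          linarith [hbound (b - a), h3 ▸ hbound (b - a)]
        rw [abs_sub_le_iff]
        constructor <;> linarith
      exact hlip.continuous
    -- minimum of R on the unit sphere
    have hw' : ‖w‖ ≠ 0 := norm_ne_zero_iff.mpr hw
    have hx₀ : (‖w‖⁻¹ • w) ∈ Metric.sphere (0 : EuclideanSpace ℝ (Fin p)) 1 := by
      rw [mem_sphere_zero_iff_norm, norm_smul, norm_inv, norm_norm]
      field_simp
    obtain ⟨z, hzs, hzmin⟩ := (isCompact_sphere (0 : EuclideanSpace ℝ (Fin p)) 1).exists_isMinOn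
      ⟨_, hx₀⟩ hcont.continuousOn
    have hz1 : ‖z‖ = 1 := mem_sphere_zero_iff_norm.mp hzs
    have hzne : z ≠ 0 := by intro h; rw [h, norm_zero] at hz1; norm_num at hz1
    have hm : 0 < R z := (hR_nonneg z).lt_of_ne fun h => hzne (hR_def z h.symm)
    -- bounded above
    have hbdd : BddAbove {y | ∃ u, R u ≤ 1 ∧ y = ⟪u, g⟫} := by
      refine ⟨‖g‖ / R z, ?_⟩
      rintro y ⟨u, hu, rfl⟩
      rcases eq_or_ne u 0 with rfl | hune
      · simpa using div_nonneg (norm_nonneg g) hm.le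
      · have hun : ‖u‖ ≠ 0 := norm_ne_zero_iff.mpr hune
        have hus : (‖u‖⁻¹ • u) ∈ Metric.sphere (0 : EuclideanSpace ℝ (Fin p)) 1 := by
          rw [mem_sphere_zero_iff_norm, norm_smul, norm_inv, norm_norm]
          field_simp
        have heq : R (‖u‖⁻¹ • u) = ‖u‖⁻¹ * R u := by
          rw [hR_smul]; congr 1
          rw [abs_of_nonneg (inv_nonneg.mpr (norm_nonneg u))]
        have hmin' : R z ≤ ‖u‖⁻¹ * R u := by
          have := hzmin hus
          simpa [heq] using this
        have hnu : R z * ‖u‖ ≤ R u := by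
          calc R z * ‖u‖ ≤ (‖u‖⁻¹ * R u) * ‖u‖ :=
                mul_le_mul_of_nonneg_right hmin' (norm_nonneg u)
            _ = R u := by field_simp
        have hule : ‖u‖ ≤ 1 / R z := by
          rw [le_div_iff₀ hm, mul_comm]
          exact hnu.trans hu
        calc ⟪u, g⟫ ≤ ‖u‖ * ‖g‖ := real_inner_le_norm u g
          _ ≤ (1 / R z) * ‖g‖ := mul_le_mul_of_nonneg_right hule (norm_nonneg g)
          _ = ‖g‖ / R z := by ring
    -- the normalized vector
    set u₀ : EuclideanSpace ℝ (Fin p) := (R w)⁻¹ • w with hu₀def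
    have hu₀ : R u₀ = 1 := by
      rw [hu₀def, hR_smul, abs_of_nonneg (inv_nonneg.mpr hRw.le)]
      field_simp
    have hmem : ⟪u₀, g⟫ ∈ {y | ∃ u, R u ≤ 1 ∧ y = ⟪u, g⟫} := ⟨u₀, le_of_eq hu₀, rfl⟩
    have hle := le_csSup hbdd hmem
    have hweq : w = R w • u₀ := by
      rw [hu₀def, smul_smul]
      rw [mul_inv_cancel₀ (ne_of_gt hRw), one_smul]
    calc ⟪w, g⟫ = R w * ⟪u₀, g⟫ := by conv_lhs => rw [hweq, real_inner_smul_left]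
      _ ≤ R w * sSup {y | ∃ u, R u ≤ 1 ∧ y = ⟪u, g⟫} :=
          mul_le_mul_of_nonneg_left hle hRw.le
      _ = _ := mul_comm _ _


/-- If `θ̂` minimizes `L + λR` with `λ ≥ 2 R*(∇L(θ*))`, then the error `Δ = θ̂ − θ*`
satisfies the cone inequality `R(Δ_{M̄ᗮ}) ≤ 3 R(Δ_{M̄}) + 4 R(θ*_{Mᗮ})`. -/
theorem stmt1 {p : ℕ}
    (L : EuclideanSpace ℝ (Fin p) → ℝ)
    (hL_convex : ConvexOn ℝ Set.univ L)
    (hL_diff : Differentiable ℝ L)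
    (R Rstar : EuclideanSpace ℝ (Fin p) → ℝ)
    (hR_nonneg : ∀ x, 0 ≤ R x)
    (hR_add : ∀ x y, R (x + y) ≤ R x + R y)
    (hR_smul : ∀ (c : ℝ) (x : EuclideanSpace ℝ (Fin p)), R (c • x) = |c| * R x)
    (hR_def : ∀ x, R x = 0 → x = 0)
    (hRstar : ∀ v, Rstar v = sSup {y | ∃ u, R u ≤ 1 ∧ y = ⟪u, v⟫})
    (M Mbar : Submodule ℝ (EuclideanSpace ℝ (Fin p)))
    (hMM : M ≤ Mbar)
    (hdecomp : ∀ θ ∈ M, ∀ γ ∈ Mbarᗮ, R (θ + γ) = R θ + R γ)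
    (θs : EuclideanSpace ℝ (Fin p))
    (lam : ℝ) (hlam_pos : 0 < lam)
    (hlam : 2 * Rstar (gradient L θs) ≤ lam)
    (θhat : EuclideanSpace ℝ (Fin p))
    (hmin : ∀ θ, L θhat + lam * R θhat ≤ L θ + lam * R θ) :
    R ((Submodule.orthogonalProjectionOnto Mbarᗮ (θhat - θs) : EuclideanSpace ℝ (Fin p)))
      ≤ 3 * R ((Submodule.orthogonalProjectionOnto Mbar (θhat - θs) : EuclideanSpace ℝ (Fin p)))
        + 4 * R ((Submodule.orthogonalProjectionOnto Mᗮ θs : EuclideanSpace ℝ (Fin p))) := by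
  set Δ : EuclideanSpace ℝ (Fin p) := θhat - θs with hΔ
  set a : EuclideanSpace ℝ (Fin p) := (Submodule.orthogonalProjectionOnto Mbar Δ : EuclideanSpace ℝ (Fin p)) with ha
  set b : EuclideanSpace ℝ (Fin p) := (Submodule.orthogonalProjectionOnto Mbarᗮ Δ : EuclideanSpace ℝ (Fin p)) with hb
  set s1 : EuclideanSpace ℝ (Fin p) := (Submodule.orthogonalProjectionOnto M θs : EuclideanSpace ℝ (Fin p)) with hs1
  set s2 : EuclideanSpace ℝ (Fin p) := (Submodule.orthogonalProjectionOnto Mᗮ θs : EuclideanSpace ℝ (Fin p)) with hs2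
  have hab : a + b = Δ := by exact Submodule.starProjection_add_starProjection_orthogonal (K := Mbar) Δ
  have hs12 : s1 + s2 = θs := by exact Submodule.starProjection_add_starProjection_orthogonal (K := M) θs
  have hRneg : ∀ x : EuclideanSpace ℝ (Fin p), R (-x) = R x := by
    intro x
    have := hR_smul (-1) x
    simpa using this
  -- (1) optimality at θs
  have h1 : L θhat + lam * R θhat ≤ L θs + lam * R θs := hmin θs
  -- (2) convexity + dual norm bound
  have h2 : L θs - L θhat ≤ lam / 2 * (R a + R b) := by
    have hgrad := grad_convex_ineq L hL_convex hL_diff θs θhat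
    have hdual := dual_bound R hR_nonneg hR_add hR_smul hR_def (gradient L θs) (-(θhat - θs))
    rw [← hRstar (gradient L θs)] at hdual
    have hRΔ : R Δ ≤ R a + R b := by
      calc R Δ = R (a + b) := by rw [hab]
        _ ≤ R a + R b := hR_add a b
    have hRnegΔ : R (-(θhat - θs)) = R Δ := by rw [hRneg]
    have hinner : ⟪-(θhat - θs), gradient L θs⟫ = -⟪gradient L θs, θhat - θs⟫ := by
      rw [inner_neg_left, real_inner_comm]
    rw [hinner, hRnegΔ] at hdual
    have hmul : Rstar (gradient L θs) * R Δ ≤ lam / 2 * (R a + R b) := by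
      have h3 : Rstar (gradient L θs) ≤ lam / 2 := by linarith
      have h4 : 0 ≤ R Δ := hR_nonneg Δ
      calc Rstar (gradient L θs) * R Δ ≤ (lam / 2) * R Δ :=
            mul_le_mul_of_nonneg_right h3 h4
        _ ≤ lam / 2 * (R a + R b) :=
            mul_le_mul_of_nonneg_left hRΔ (by linarith)
    linarith
  -- (3) lower bound on R θhat via decomposability
  have h3 : R s1 + R b ≤ R θhat + R s2 + R a := by
    have hmem1 : s1 ∈ M := SetLike.coe_mem _
    have hmemb : b ∈ Mbarᗮ := SetLike.coe_mem _
    have hdec : R (s1 + b) = R s1 + R b := hdecomp s1 hmem1 b hmemb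
    have hsum : s1 + b = θhat + (-(s2 + a)) := by
      have : θhat = θs + Δ := by rw [hΔ]; abel
      rw [this, ← hs12, ← hab]
      abel
    calc R s1 + R b = R (s1 + b) := hdec.symm
      _ = R (θhat + (-(s2 + a))) := by rw [hsum]
      _ ≤ R θhat + R (-(s2 + a)) := hR_add _ _
      _ = R θhat + R (s2 + a) := by rw [hRneg]
      _ ≤ R θhat + (R s2 + R a) := by linarith [hR_add s2 a]
      _ = R θhat + R s2 + R a := by ring
  -- (4) triangle for θs
  have h4 : R θs ≤ R s1 + R s2 := by
    calc R θs = R (s1 + s2) := by rw [hs12]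
      _ ≤ R s1 + R s2 := hR_add s1 s2
  -- combine
  have h5 : R b - R a - 2 * R s2 ≤ R θhat - R θs := by linarith
  have h6 : lam * (R b - R a - 2 * R s2) ≤ lam * (R θhat - R θs) :=
    mul_le_mul_of_nonneg_left h5 hlam_pos.le
  have h7 : lam * (R θhat - R θs) ≤ L θs - L θhat := by
    rw [mul_sub]; linarith
  have he : lam / 2 * (R a + R b) = lam * ((R a + R b) / 2) := by ring
  have h8 : lam * (R b - R a - 2 * R s2) ≤ lam * ((R a + R b) / 2) := by linarith
  have h9 : R b - R a - 2 * R s2 ≤ (R a + R b) / 2 :=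
    le_of_mul_le_mul_left h8 hlam_pos
  linarith
end

section
/- Let L : R^p → R be convex and differentiable, R a norm with dual norm R*, and δ* ∈ R^p with R(δ*) ≤ l. Suppose L satisfies the restricted strong convexity condition: L(δ* + Δ) − L(δ*) − ⟨∇L(δ*), Δ⟩ ≥ κ‖Δ‖² − τ for all Δ with R(Δ) ≤ 4l, where κ > 0 and τ ≥ 0. If δ̂ minimizes δ ↦ L(δ) + λ R(δ) with λ ≥ 2 R*(∇L(δ*)), then Δ̂ = δ̂ − δ* satisfies κ‖Δ̂‖² ≤ 2 R*(∇L(δ*)) · l + λ R(δ*) + τ ≤ 3 λ l + τ. -/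
open scoped RealInnerProductSpace

section Aux

variable {p : ℕ}

private lemma aux_sum_le (R : EuclideanSpace ℝ (Fin p) → ℝ)
    (hR0 : R 0 = 0)
    (hR_add : ∀ x y, R (x + y) ≤ R x + R y)
    {ι : Type*} (s : Finset ι) (f : ι → EuclideanSpace ℝ (Fin p)) :
    R (∑ i ∈ s, f i) ≤ ∑ i ∈ s, R (f i) := by
  classical
  induction s using Finset.induction with
  | empty => simp [hR0]
  | insert a s hnot ih =>
    rw [Finset.sum_insert hnot, Finset.sum_insert hnot]
    exact (hR_add _ _).trans (by linarith)

private lemma aux_bound (R : EuclideanSpace ℝ (Fin p) → ℝ)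
    (hR_nonneg : ∀ x, 0 ≤ R x)
    (hR_add : ∀ x y, R (x + y) ≤ R x + R y)
    (hR_smul : ∀ (c : ℝ) (x : EuclideanSpace ℝ (Fin p)), R (c • x) = |c| * R x)
    (hR_def : ∀ x, R x = 0 → x = 0) :
    ∃ c : ℝ, 0 < c ∧ ∀ x, c * ‖x‖ ≤ R x := by
  have hR0 : R 0 = 0 := by simpa using hR_smul 0 0
  obtain ⟨C, hC⟩ : ∃ C : ℝ, ∀ x, R x ≤ C * ‖x‖ := by
    refine ⟨∑ i : Fin p, R (EuclideanSpace.single i 1), fun x => ?_⟩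
    have hx : x = ∑ i : Fin p, x i • EuclideanSpace.single i (1 : ℝ) := by
      have h1 := (EuclideanSpace.basisFun (Fin p) ℝ).sum_repr x
      simp only [EuclideanSpace.basisFun_repr, EuclideanSpace.basisFun_apply] at h1
      exact h1.symm
    calc R x = R (∑ i : Fin p, x i • EuclideanSpace.single i (1 : ℝ)) := by rw [← hx]
      _ ≤ ∑ i : Fin p, R (x i • EuclideanSpace.single i (1 : ℝ)) :=
            aux_sum_le R hR0 hR_add _ _
      _ ≤ ∑ i : Fin p, ‖x‖ * R (EuclideanSpace.single i (1 : ℝ)) := by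
            refine Finset.sum_le_sum fun i _ => ?_
            rw [hR_smul]
            have h1 : |x i| ≤ ‖x‖ := by
              have hinner : ⟪EuclideanSpace.single i (1:ℝ), x⟫ = x i := by
                simp [EuclideanSpace.inner_single_left]
              have hns : ‖EuclideanSpace.single i (1:ℝ)‖ = 1 := by
                simp [EuclideanSpace.norm_single]
              have habs := abs_real_inner_le_norm (EuclideanSpace.single i (1:ℝ)) x
              rw [hinner, hns, one_mul] at habs
              exact habs
            exact mul_le_mul_of_nonneg_right h1 (hR_nonneg _)
      _ = (∑ i : Fin p, R (EuclideanSpace.single i (1 : ℝ))) * ‖x‖ := by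
            rw [Finset.sum_mul]; simp [mul_comm]
  have hcont : Continuous R := by
    have hlip : LipschitzWith (Real.toNNReal C) R := by
      refine LipschitzWith.of_dist_le_mul fun x y => ?_
      have h1 : R x - R y ≤ R (x - y) := by
        have := hR_add (x - y) y; simpa using this
      have hneg : R (y - x) = R (x - y) := by
        have := hR_smul (-1) (x - y); simpa [neg_sub] using this
      have h2 : R y - R x ≤ R (x - y) := by
        have := hR_add (y - x) x
        rw [hneg] at this; simpa using this
      have habs : |R x - R y| ≤ R (x - y) := abs_sub_le_iff.2 ⟨h1, h2⟩
      have hRC : R (x - y) ≤ (Real.toNNReal C : ℝ) * ‖x - y‖ := by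
        refine (hC (x - y)).trans ?_
        gcongr
        exact Real.le_coe_toNNReal C
      calc dist (R x) (R y) = |R x - R y| := Real.dist_eq _ _
        _ ≤ R (x - y) := habs
        _ ≤ (Real.toNNReal C : ℝ) * ‖x - y‖ := hRC
        _ = (Real.toNNReal C : ℝ) * dist x y := by rw [dist_eq_norm]
    exact hlip.continuous
  rcases Nat.eq_zero_or_pos p with hp | hp
  · subst hp
    refine ⟨1, one_pos, fun x => ?_⟩
    have hx0 : x = 0 := by ext i; exact i.elim0
    subst hx0
    simp [hR0]
  · have hsne : (Metric.sphere (0 : EuclideanSpace ℝ (Fin p)) 1).Nonempty := by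
      have : Nontrivial (EuclideanSpace ℝ (Fin p)) := by
        refine ⟨⟨EuclideanSpace.single ⟨0, hp⟩ 1, 0, ?_⟩⟩
        intro h
        have := congrArg (fun z : EuclideanSpace ℝ (Fin p) => z ⟨0, hp⟩) h
        simp [EuclideanSpace.single_apply] at this
      exact NormedSpace.sphere_nonempty.mpr one_pos.le
    have hscomp : IsCompact (Metric.sphere (0 : EuclideanSpace ℝ (Fin p)) 1) :=
      isCompact_sphere 0 1
    obtain ⟨u₀, hu₀mem, hu₀min⟩ := hscomp.exists_isMinOn hsne hcont.continuousOn
    have hu₀norm : ‖u₀‖ = 1 := by simpa using mem_sphere_zero_iff_norm.mp hu₀mem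
    have hm : 0 < R u₀ := by
      rcases lt_or_eq_of_le (hR_nonneg u₀) with h | h
      · exact h
      · exfalso
        have : u₀ = 0 := hR_def u₀ h.symm
        rw [this] at hu₀norm; simp at hu₀norm
    refine ⟨R u₀, hm, fun x => ?_⟩
    rcases eq_or_ne x 0 with rfl | hx
    · simp [hR0]
    · have hxn : (0 : ℝ) < ‖x‖ := norm_pos_iff.mpr hx
      have hmem : (‖x‖⁻¹ • x) ∈ Metric.sphere (0 : EuclideanSpace ℝ (Fin p)) 1 := by
        simp [norm_smul, abs_of_pos (inv_pos.mpr hxn), inv_mul_cancel₀ hxn.ne']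
      have h3 : R u₀ ≤ R (‖x‖⁻¹ • x) := hu₀min hmem
      rw [hR_smul, abs_of_pos (inv_pos.mpr hxn)] at h3
      calc R u₀ * ‖x‖ ≤ ‖x‖⁻¹ * R x * ‖x‖ := by gcongr
        _ = R x := by field_simp

end Aux

/-- Lagrangian fine-tuning error bound under restricted strong convexity. -/
theorem stmt6 {p : ℕ}
    (L : EuclideanSpace ℝ (Fin p) → ℝ)
    (hL_convex : ConvexOn ℝ Set.univ L)
    (hL_diff : Differentiable ℝ L)
    (R Rstar : EuclideanSpace ℝ (Fin p) → ℝ)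
    (hR_nonneg : ∀ x, 0 ≤ R x)
    (hR_add : ∀ x y, R (x + y) ≤ R x + R y)
    (hR_smul : ∀ (c : ℝ) (x : EuclideanSpace ℝ (Fin p)), R (c • x) = |c| * R x)
    (hR_def : ∀ x, R x = 0 → x = 0)
    (hRstar : ∀ v, Rstar v = sSup {y | ∃ u, R u ≤ 1 ∧ y = ⟪u, v⟫})
    (δs : EuclideanSpace ℝ (Fin p)) (l : ℝ) (hδs : R δs ≤ l)
    (κ τ : ℝ) (hκ : 0 < κ) (hτ : 0 ≤ τ)
    (hRSC : ∀ Δ : EuclideanSpace ℝ (Fin p), R Δ ≤ 4 * l →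
      κ * ‖Δ‖ ^ 2 - τ ≤ L (δs + Δ) - L δs - ⟪gradient L δs, Δ⟫)
    (lam : ℝ) (hlam_pos : 0 < lam)
    (hlam : 2 * Rstar (gradient L δs) ≤ lam)
    (δhat : EuclideanSpace ℝ (Fin p))
    (hmin : ∀ δ, L δhat + lam * R δhat ≤ L δ + lam * R δ) :
    κ * ‖δhat - δs‖ ^ 2 ≤ 2 * Rstar (gradient L δs) * l + lam * R δs + τ ∧
      2 * Rstar (gradient L δs) * l + lam * R δs + τ ≤ 3 * lam * l + τ := by
  set g := gradient L δs with hg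
  set Δ := δhat - δs with hΔ
  have hR0 : R 0 = 0 := by simpa using hR_smul 0 0
  have hRneg : ∀ x, R (-x) = R x := fun x => by
    have := hR_smul (-1) x; simpa using this
  obtain ⟨c, hc_pos, hc⟩ := aux_bound R hR_nonneg hR_add hR_smul hR_def
  have hbdd : ∀ v : EuclideanSpace ℝ (Fin p),
      BddAbove {y | ∃ u, R u ≤ 1 ∧ y = ⟪u, v⟫} := by
    intro v
    refine ⟨c⁻¹ * ‖v‖, fun y hy => ?_⟩
    obtain ⟨u, hu, rfl⟩ := hy
    have hun : ‖u‖ ≤ c⁻¹ := by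
      have h1 : c * ‖u‖ ≤ 1 := (hc u).trans hu
      calc ‖u‖ = c⁻¹ * (c * ‖u‖) := by field_simp
        _ ≤ c⁻¹ * 1 := by
            exact mul_le_mul_of_nonneg_left h1 (inv_pos.mpr hc_pos).le
        _ = c⁻¹ := mul_one _
    calc ⟪u, v⟫ ≤ ‖u‖ * ‖v‖ := real_inner_le_norm u v
      _ ≤ c⁻¹ * ‖v‖ := by gcongr
  have hdual : ∀ (u v : EuclideanSpace ℝ (Fin p)), ⟪u, v⟫ ≤ R u * Rstar v := by
    intro u v
    rcases eq_or_lt_of_le (hR_nonneg u) with h | h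
    · have hu0 : u = 0 := hR_def u h.symm
      simp [hu0, hR0]
    · have hmem : (R u)⁻¹ * ⟪u, v⟫ ∈ {y | ∃ w, R w ≤ 1 ∧ y = ⟪w, v⟫} := by
        refine ⟨(R u)⁻¹ • u, ?_, ?_⟩
        · rw [hR_smul, abs_of_pos (inv_pos.mpr h), inv_mul_cancel₀ h.ne']
        · rw [real_inner_smul_left]
      have hle : (R u)⁻¹ * ⟪u, v⟫ ≤ Rstar v := by
        rw [hRstar]; exact le_csSup (hbdd v) hmem
      calc ⟪u, v⟫ = R u * ((R u)⁻¹ * ⟪u, v⟫) := by field_simp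
        _ ≤ R u * Rstar v := mul_le_mul_of_nonneg_left hle h.le
  have hRs_nonneg : ∀ v, 0 ≤ Rstar v := by
    intro v
    rw [hRstar]
    have hmem : (0 : ℝ) ∈ {y | ∃ w, R w ≤ 1 ∧ y = ⟪w, v⟫} :=
      ⟨0, by simp [hR0], by simp⟩
    exact le_csSup (hbdd v) hmem
  -- convexity: gradient inequality
  have hgrad : ∀ v : EuclideanSpace ℝ (Fin p), ⟪g, v⟫ ≤ L (δs + v) - L δs := by
    intro v
    set φ : ℝ → EuclideanSpace ℝ (Fin p) := fun t => δs + t • v with hφ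
    have hφa : ∀ t : ℝ, φ t = (AffineMap.lineMap δs (δs + v)) t := by
      intro t; simp [hφ, AffineMap.lineMap_apply]; abel_nf
    have hconv : ConvexOn ℝ Set.univ (L ∘ φ) := by
      have h1 : ConvexOn ℝ ((AffineMap.lineMap δs (δs + v) :
          ℝ →ᵃ[ℝ] EuclideanSpace ℝ (Fin p)) ⁻¹' Set.univ)
          (L ∘ (AffineMap.lineMap δs (δs + v))) :=
        hL_convex.comp_affineMap _
      have heq : (L ∘ φ) = L ∘ (AffineMap.lineMap δs (δs + v)) := by
        funext t; simp [Function.comp, hφa t]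
      rw [heq]
      simpa using h1
    have hderiv : HasDerivAt (L ∘ φ) ⟪g, v⟫ 0 := by
      have h1 : HasDerivAt φ v 0 := by
        have : HasDerivAt (fun t : ℝ => t • v) ((1:ℝ) • v) 0 :=
          (hasDerivAt_id (0:ℝ)).smul_const v
        simpa [hφ] using this.const_add δs
      have h2 : HasFDerivAt L (InnerProductSpace.toDual ℝ _ g) δs :=
        (hL_diff δs).hasGradientAt
      have h2' : HasFDerivAt L (InnerProductSpace.toDual ℝ _ g) (φ 0) := by
        simpa [hφ] using h2
      have h3 := h2'.comp_hasDerivAt 0 h1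
      simpa [InnerProductSpace.toDual_apply_apply] using h3
    have hs := hconv.le_slope_of_hasDerivAt (Set.mem_univ (0:ℝ)) (Set.mem_univ (1:ℝ))
      one_pos hderiv
    simpa [slope_def_field, hφ, Function.comp] using hs
  -- key inequalities
  have hF2 : L δhat - L δs ≤ lam * (R δs - R δhat) := by linarith [hmin δs]
  have hF1 : ⟪g, Δ⟫ ≤ L δhat - L δs := by
    have := hgrad Δ
    simpa [hΔ] using this
  have hinner_symm : ⟪Δ, g⟫ = ⟪g, Δ⟫ := real_inner_comm g Δ
  have hF3 : -⟪g, Δ⟫ ≤ R Δ * Rstar g := by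
    have := hdual (-Δ) g
    have hRn := hRneg Δ
    simpa [inner_neg_left, hinner_symm, hRn] using this
  have hRΔ : R Δ ≤ R δhat + R δs := by
    have := hR_add δhat (-δs)
    simpa [hΔ, sub_eq_add_neg, hRneg] using this
  have hl0 : 0 ≤ l := le_trans (hR_nonneg δs) hδs
  -- cone bound
  have hcone : R δhat ≤ 3 * R δs := by
    have h2 : ⟪g, Δ⟫ ≤ lam * (R δs - R δhat) := hF1.trans hF2
    have h4 : R Δ * Rstar g ≤ (R δhat + R δs) * Rstar g :=
      mul_le_mul_of_nonneg_right hRΔ (hRs_nonneg g)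
    have ha : 2 * Rstar g * R δhat ≤ lam * R δhat :=
      mul_le_mul_of_nonneg_right hlam (hR_nonneg δhat)
    have hb : 2 * Rstar g * R δs ≤ lam * R δs :=
      mul_le_mul_of_nonneg_right hlam (hR_nonneg δs)
    have hC : lam * R δhat ≤ lam * (3 * R δs) := by nlinarith
    exact le_of_mul_le_mul_left (by linarith) hlam_pos
  have hRΔ4 : R Δ ≤ 4 * l := by
    calc R Δ ≤ R δhat + R δs := hRΔ
      _ ≤ 3 * R δs + R δs := by linarith
      _ ≤ 4 * l := by linarith
  have hRSCΔ := hRSC Δ hRΔ4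
  have hδconv : δs + Δ = δhat := by simp [hΔ]
  rw [hδconv] at hRSCΔ
  constructor
  · have hchain : κ * ‖Δ‖ ^ 2 - τ ≤ lam * (R δs - R δhat) + R Δ * Rstar g := by
      calc κ * ‖Δ‖ ^ 2 - τ ≤ L δhat - L δs - ⟪g, Δ⟫ := hRSCΔ
        _ ≤ lam * (R δs - R δhat) + R Δ * Rstar g := by linarith [hF2, hF3]
    have h5 : R Δ * Rstar g ≤ (R δhat + R δs) * Rstar g :=
      mul_le_mul_of_nonneg_right hRΔ (hRs_nonneg g)
    have h5' : (R δhat + R δs) * Rstar g = Rstar g * R δhat + Rstar g * R δs := by ring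
    have h6 : Rstar g * R δhat ≤ lam * R δhat := by
      have hRl : Rstar g ≤ lam := by linarith [hRs_nonneg g]
      exact mul_le_mul_of_nonneg_right hRl (hR_nonneg δhat)
    have h7 : Rstar g * R δs ≤ Rstar g * l :=
      mul_le_mul_of_nonneg_left hδs (hRs_nonneg g)
    have h8 : 0 ≤ Rstar g * l := mul_nonneg (hRs_nonneg g) hl0
    have hΔnorm : ‖Δ‖ = ‖δhat - δs‖ := by rw [hΔ]
    rw [← hΔnorm]
    linarith
  · have h1 : 2 * Rstar g * l ≤ lam * l := mul_le_mul_of_nonneg_right hlam hl0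
    have h2 : lam * R δs ≤ lam * l := mul_le_mul_of_nonneg_left hδs hlam_pos.le
    have h3 : 0 ≤ lam * l := mul_nonneg hlam_pos.le hl0
    linarith
end

section
/- Let L : R^p → R be convex and differentiable, R a norm with dual norm R*, and δ* ∈ R^p with R(δ*) ≤ l. Let δ̂ be a minimizer of L over the constraint set {δ : R(δ) ≤ l}, and suppose L satisfies the restricted strong convexity condition L(δ* + Δ) − L(δ*) − ⟨∇L(δ*), Δ⟩ ≥ κ‖Δ‖² − τ for all Δ with R(Δ) ≤ 2l. Then Δ̂ = δ̂ − δ* satisfies κ‖Δ̂‖² ≤ 2 R*(∇L(δ*)) l + τ. -/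
open scoped RealInnerProductSpace

section Aux

variable {p : ℕ}

/-- Any "norm" `R` on Euclidean space dominates a positive multiple of the Euclidean norm. -/
lemma aux_norm_equiv (R : EuclideanSpace ℝ (Fin p) → ℝ)
    (hR_nonneg : ∀ x, 0 ≤ R x)
    (hR_add : ∀ x y, R (x + y) ≤ R x + R y)
    (hR_smul : ∀ (c : ℝ) (x : EuclideanSpace ℝ (Fin p)), R (c • x) = |c| * R x)
    (hR_def : ∀ x, R x = 0 → x = 0) :
    ∃ c > 0, ∀ x, c * ‖x‖ ≤ R x := by
  have hR0 : R 0 = 0 := by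
    have := hR_smul 0 0
    simpa using this
  -- R is Lipschitz, hence continuous
  have hcoord : ∀ (x : EuclideanSpace ℝ (Fin p)) (i : Fin p), |x i| ≤ ‖x‖ := by
    intro x i
    have h1 : |⟪EuclideanSpace.single i (1:ℝ), x⟫| ≤ ‖EuclideanSpace.single i (1:ℝ)‖ * ‖x‖ :=
      abs_real_inner_le_norm _ _
    simpa [EuclideanSpace.inner_single_left, EuclideanSpace.norm_single] using h1
  set C : ℝ := ∑ i : Fin p, R (EuclideanSpace.single i 1) with hC
  have hCnn : 0 ≤ C := Finset.sum_nonneg fun i _ => hR_nonneg _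
  have hbound : ∀ x, R x ≤ C * ‖x‖ := by
    intro x
    have hx : x = ∑ i : Fin p, x i • EuclideanSpace.single i (1:ℝ) := by
      have := (EuclideanSpace.basisFun (Fin p) ℝ).sum_repr x
      simpa [EuclideanSpace.basisFun_apply, EuclideanSpace.basisFun_repr] using this.symm
    calc R x = R (∑ i : Fin p, x i • EuclideanSpace.single i (1:ℝ)) := by rw [← hx]
      _ ≤ ∑ i : Fin p, R (x i • EuclideanSpace.single i (1:ℝ)) :=
          Finset.le_sum_of_subadditive R hR0.le hR_add _ _
      _ = ∑ i : Fin p, |x i| * R (EuclideanSpace.single i (1:ℝ)) := by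
          simp [hR_smul]
      _ ≤ ∑ i : Fin p, ‖x‖ * R (EuclideanSpace.single i (1:ℝ)) := by
          refine Finset.sum_le_sum fun i _ => ?_
          exact mul_le_mul_of_nonneg_right (hcoord x i) (hR_nonneg _)
      _ = C * ‖x‖ := by
          rw [hC, Finset.sum_mul]
          exact Finset.sum_congr rfl fun i _ => mul_comm _ _
  have hRsub : ∀ x y, R x - R y ≤ R (x - y) := by
    intro x y
    have := hR_add (x - y) y
    simp only [sub_add_cancel] at this
    linarith
  have hcont : Continuous R := by
    have : LipschitzWith (Real.toNNReal C) R := by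
      refine LipschitzWith.of_dist_le_mul fun x y => ?_
      rw [Real.dist_eq, dist_eq_norm]
      have h1 : R x - R y ≤ C * ‖x - y‖ := le_trans (hRsub x y) (hbound _)
      have h2 : R y - R x ≤ C * ‖x - y‖ := by
        have := le_trans (hRsub y x) (hbound (y - x))
        rwa [norm_sub_rev] at this
      rw [abs_sub_le_iff]
      constructor <;> [exact le_trans h1 (by rw [Real.coe_toNNReal C hCnn]);
        exact le_trans h2 (by rw [Real.coe_toNNReal C hCnn])]
    exact this.continuous
  -- sphere argument
  by_cases hsp : (Metric.sphere (0 : EuclideanSpace ℝ (Fin p)) 1).Nonempty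
  · obtain ⟨x0, hx0mem, hx0min⟩ :=
      (isCompact_sphere (0 : EuclideanSpace ℝ (Fin p)) 1).exists_isMinOn hsp
        hcont.continuousOn
    have hx0norm : ‖x0‖ = 1 := by simpa using mem_sphere_zero_iff_norm.mp hx0mem
    have hx0ne : x0 ≠ 0 := by
      intro h; rw [h] at hx0norm; simp at hx0norm
    have hc : 0 < R x0 := by
      rcases lt_or_eq_of_le (hR_nonneg x0) with h | h
      · exact h
      · exact absurd (hR_def x0 h.symm) hx0ne
    refine ⟨R x0, hc, fun x => ?_⟩
    by_cases hx : x = 0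
    · simp [hx, hR0]
    · have hxn : 0 < ‖x‖ := norm_pos_iff.mpr hx
      have hmem : ‖x‖⁻¹ • x ∈ Metric.sphere (0 : EuclideanSpace ℝ (Fin p)) 1 := by
        rw [mem_sphere_zero_iff_norm, norm_smul, norm_inv, norm_norm]
        field_simp
      have hmin2 : R x0 ≤ R (‖x‖⁻¹ • x) := hx0min hmem
      have h2 : R (‖x‖⁻¹ • x) = ‖x‖⁻¹ * R x := by
        rw [hR_smul, abs_of_pos (inv_pos.mpr hxn)]
      rw [h2] at hmin2
      calc R x0 * ‖x‖ ≤ (‖x‖⁻¹ * R x) * ‖x‖ := by nlinarith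
        _ = R x := by field_simp
  · refine ⟨1, one_pos, fun x => ?_⟩
    by_cases hx : x = 0
    · simp [hx, hR0]
    · exfalso
      have hxn : 0 < ‖x‖ := norm_pos_iff.mpr hx
      exact hsp ⟨‖x‖⁻¹ • x, by
        rw [mem_sphere_zero_iff_norm, norm_smul, norm_inv, norm_norm]; field_simp⟩

end Aux

/-- Constrained fine-tuning error bound under restricted strong convexity. -/
theorem stmt7 {p : ℕ}
    (L : EuclideanSpace ℝ (Fin p) → ℝ)
    (hL_convex : ConvexOn ℝ Set.univ L)
    (hL_diff : Differentiable ℝ L)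
    (R Rstar : EuclideanSpace ℝ (Fin p) → ℝ)
    (hR_nonneg : ∀ x, 0 ≤ R x)
    (hR_add : ∀ x y, R (x + y) ≤ R x + R y)
    (hR_smul : ∀ (c : ℝ) (x : EuclideanSpace ℝ (Fin p)), R (c • x) = |c| * R x)
    (hR_def : ∀ x, R x = 0 → x = 0)
    (hRstar : ∀ v, Rstar v = sSup {y | ∃ u, R u ≤ 1 ∧ y = ⟪u, v⟫})
    (δs : EuclideanSpace ℝ (Fin p)) (l : ℝ) (hδs : R δs ≤ l)
    (κ τ : ℝ) (hκ : 0 < κ) (hτ : 0 ≤ τ)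
    (hRSC : ∀ Δ : EuclideanSpace ℝ (Fin p), R Δ ≤ 2 * l →
      κ * ‖Δ‖ ^ 2 - τ ≤ L (δs + Δ) - L δs - ⟪gradient L δs, Δ⟫)
    (δhat : EuclideanSpace ℝ (Fin p))
    (hfeas : R δhat ≤ l)
    (hmin : ∀ δ, R δ ≤ l → L δhat ≤ L δ) :
    κ * ‖δhat - δs‖ ^ 2 ≤ 2 * Rstar (gradient L δs) * l + τ := by
  set g := gradient L δs with hg
  set Δ := δhat - δs with hΔ
  have hRneg : ∀ x, R (-x) = R x := fun x => by
    simpa using hR_smul (-1) x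
  have hR0 : R 0 = 0 := by simpa using hR_smul 0 0
  have hRΔ : R Δ ≤ 2 * l := by
    calc R Δ = R (δhat + (-δs)) := by rw [hΔ, sub_eq_add_neg]
      _ ≤ R δhat + R (-δs) := hR_add _ _
      _ = R δhat + R δs := by rw [hRneg]
      _ ≤ 2 * l := by linarith
  have hLle : L δhat ≤ L δs := hmin δs hδs
  have hrsc := hRSC Δ hRΔ
  have hΔeq : δs + Δ = δhat := by rw [hΔ]; abel
  rw [hΔeq] at hrsc
  have hkey : κ * ‖Δ‖ ^ 2 ≤ ⟪-Δ, g⟫ + τ := by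
    have : ⟪g, Δ⟫ = -⟪-Δ, g⟫ := by
      rw [real_inner_comm]; simp
    rw [this] at hrsc
    linarith
  -- bound the inner product by the dual norm
  obtain ⟨c, hc, hnormle⟩ := aux_norm_equiv R hR_nonneg hR_add hR_smul hR_def
  have hbdd : BddAbove {y | ∃ u, R u ≤ 1 ∧ y = ⟪u, g⟫} := by
    refine ⟨c⁻¹ * ‖g‖, fun y hy => ?_⟩
    obtain ⟨u, hu, rfl⟩ := hy
    have h1 : ‖u‖ ≤ c⁻¹ := by
      have h2 := hnormle u
      nlinarith [mul_inv_cancel₀ (ne_of_gt hc), norm_nonneg u]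
    calc ⟪u, g⟫ ≤ ‖u‖ * ‖g‖ := real_inner_le_norm u g
      _ ≤ c⁻¹ * ‖g‖ := mul_le_mul_of_nonneg_right h1 (norm_nonneg g)
  have hl0 : 0 ≤ l := le_trans (hR_nonneg δs) hδs
  rcases eq_or_lt_of_le hl0 with hl | hl
  · -- l = 0
    have hδs0 : δs = 0 := hR_def _ (le_antisymm (hl ▸ hδs) (hR_nonneg _))
    have hδhat0 : δhat = 0 := hR_def _ (le_antisymm (hl ▸ hfeas) (hR_nonneg _))
    have : Δ = 0 := by rw [hΔ, hδs0, hδhat0]; simp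
    rw [this, ← hl]
    simp [hτ]
  · -- l > 0
    have hinner : ⟪-Δ, g⟫ ≤ 2 * Rstar g * l := by
      set u := (2 * l)⁻¹ • (-Δ) with hu
      have hRu : R u ≤ 1 := by
        rw [hu, hR_smul, abs_of_pos (by positivity : (0:ℝ) < (2*l)⁻¹), hRneg]
        rw [inv_mul_le_iff₀ (by linarith)]
        linarith
      have hmem : ⟪u, g⟫ ∈ {y | ∃ u, R u ≤ 1 ∧ y = ⟪u, g⟫} := ⟨u, hRu, rfl⟩
      have hle : ⟪u, g⟫ ≤ Rstar g := by
        rw [hRstar g]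
        exact le_csSup hbdd hmem
      have hue : ⟪u, g⟫ = (2 * l)⁻¹ * ⟪-Δ, g⟫ := by
        rw [hu, real_inner_smul_left]
      rw [hue] at hle
      have h2l : (0:ℝ) < 2 * l := by linarith
      calc ⟪-Δ, g⟫ = (2 * l) * ((2 * l)⁻¹ * ⟪-Δ, g⟫) := by
            rw [← mul_assoc, mul_inv_cancel₀ h2l.ne', one_mul]
        _ ≤ (2 * l) * Rstar g := mul_le_mul_of_nonneg_left hle (le_of_lt h2l)
        _ = 2 * Rstar g * l := by ring
    linarith
end

section
/- Let θ ∈ R^{d₁×d₂} have rank at most r, with reduced singular value decomposition θ = U^r D (V^r)ᵀ where U^r, V^r have r orthonormal columns. Define the subspace M̄ = {A : row(A) ⊆ col(V^r) or col(A) ⊆ col(U^r)}^⊥⊥ as the orthogonal complement of M̄^⊥ := {A : row(A) ⊥ col(V^r) and col(A) ⊥ col(U^r)}. Then every matrix Δ ∈ M̄ has rank at most 2r, and consequently ‖Δ‖_N ≤ √(2r) ‖Δ‖_F for all Δ ∈ M̄. -/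
open Matrix

lemma my_rank_add_le {d₁ d₂ : ℕ} (A B : Matrix (Fin d₁) (Fin d₂) ℝ) :
    (A + B).rank ≤ A.rank + B.rank := by
  dsimp only [Matrix.rank]
  have hr : LinearMap.range (A + B).mulVecLin ≤
      LinearMap.range A.mulVecLin ⊔ LinearMap.range B.mulVecLin := by
    rintro x ⟨v, rfl⟩
    rw [Matrix.mulVecLin_add]
    exact Submodule.add_mem_sup ⟨v, rfl⟩ ⟨v, rfl⟩
  calc Module.finrank ℝ (LinearMap.range (A + B).mulVecLin)
      ≤ Module.finrank ℝ (LinearMap.range A.mulVecLin ⊔ LinearMap.range B.mulVecLin :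
        Submodule ℝ (Fin d₁ → ℝ)) := Submodule.finrank_mono hr
    _ ≤ _ := Submodule.finrank_add_le_finrank_add_finrank _ _

lemma my_trace_eq_sum_eigenvalues {n : ℕ} {A : Matrix (Fin n) (Fin n) ℝ}
    (hA : A.IsHermitian) : A.trace = ∑ i, hA.eigenvalues i := by
  rw [hA.trace_eq_sum_eigenvalues]
  simp

/-- For a rank-`r` matrix `θ = U D Vᵀ` with `U, V` having orthonormal columns, every
matrix `Δ` in the subspace `M̄` (the orthogonal complement, w.r.t. the trace inner
product, of the set of matrices whose column space is orthogonal to `col(U)` and whose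
row space is orthogonal to `col(V)`) has rank at most `2r`, and consequently
`‖Δ‖_N ≤ √(2r) ‖Δ‖_F`. -/
theorem stmt10 {d₁ d₂ r : ℕ}
    (U : Matrix (Fin d₁) (Fin r) ℝ) (V : Matrix (Fin d₂) (Fin r) ℝ)
    (D : Matrix (Fin r) (Fin r) ℝ)
    (hU : Uᵀ * U = 1) (hV : Vᵀ * V = 1)
    (θ : Matrix (Fin d₁) (Fin d₂) ℝ) (hθ : θ = U * D * Vᵀ)
    (Δ : Matrix (Fin d₁) (Fin d₂) ℝ)
    (hΔ : ∀ B : Matrix (Fin d₁) (Fin d₂) ℝ, Uᵀ * B = 0 → B * V = 0 →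
      Matrix.trace (Bᵀ * Δ) = 0) :
    Δ.rank ≤ 2 * r ∧
      (∑ i, Real.sqrt ((show (Δᵀ * Δ).IsHermitian by
        simpa using Matrix.isHermitian_conjTranspose_mul_self Δ).eigenvalues i))
        ≤ Real.sqrt (2 * r) * Real.sqrt (∑ i, ∑ j, (Δ i j) ^ 2) := by
  set P : Matrix (Fin d₁) (Fin d₁) ℝ := U * Uᵀ with hP
  set Q : Matrix (Fin d₂) (Fin d₂) ℝ := V * Vᵀ with hQ
  set B : Matrix (Fin d₁) (Fin d₂) ℝ := (1 - P) * Δ * (1 - Q) with hB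
  have hUP : Uᵀ * (1 - P) = 0 := by
    rw [Matrix.mul_sub, Matrix.mul_one, hP, ← Matrix.mul_assoc, hU, Matrix.one_mul, sub_self]
  have hQV : (1 - Q) * V = 0 := by
    rw [Matrix.sub_mul, Matrix.one_mul, hQ, Matrix.mul_assoc, hV, Matrix.mul_one, sub_self]
  have hUB : Uᵀ * B = 0 := by
    rw [hB, ← Matrix.mul_assoc, ← Matrix.mul_assoc, hUP, Matrix.zero_mul, Matrix.zero_mul]
  have hBV : B * V = 0 := by
    rw [hB, Matrix.mul_assoc, hQV, Matrix.mul_zero]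
  have hBU : Bᵀ * U = 0 := by
    have := congrArg Matrix.transpose hUB
    simpa [Matrix.transpose_mul] using this
  have hVB : Vᵀ * Bᵀ = 0 := by
    have := congrArg Matrix.transpose hBV
    simpa [Matrix.transpose_mul] using this
  have hdecomp : Δ = P * Δ + (1 - P) * Δ * Q + B := by
    rw [hB, Matrix.mul_sub, Matrix.mul_one, Matrix.sub_mul, Matrix.one_mul]
    abel
  have htr : Matrix.trace (Bᵀ * B) = 0 := by
    have h0 := hΔ B hUB hBV
    conv_lhs at h0 => rw [hdecomp]
    have h1 : Bᵀ * (P * Δ) = 0 := by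
      rw [hP, ← Matrix.mul_assoc, ← Matrix.mul_assoc, hBU, Matrix.zero_mul, Matrix.zero_mul]
    have h2 : Matrix.trace (Bᵀ * ((1 - P) * Δ * Q)) = 0 := by
      have e : Bᵀ * ((1 - P) * Δ * Q) = (Bᵀ * ((1 - P) * Δ * V)) * Vᵀ := by
        rw [hQ]; simp only [Matrix.mul_assoc]
      have e2 : Vᵀ * (Bᵀ * ((1 - P) * Δ * V)) = 0 := by
        rw [← Matrix.mul_assoc, hVB, Matrix.zero_mul]
      rw [e, Matrix.trace_mul_comm, e2, Matrix.trace_zero]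
    rw [Matrix.mul_add, Matrix.mul_add, Matrix.trace_add, Matrix.trace_add, h1,
      Matrix.trace_zero, zero_add, h2, zero_add] at h0
    exact h0
  have hB0 : B = 0 := by
    have hsum : ∑ j, ∑ i, B i j * B i j = 0 := by
      have e : Matrix.trace (Bᵀ * B) = ∑ j, ∑ i, B i j * B i j := by
        simp [Matrix.trace, Matrix.diag, Matrix.mul_apply, Matrix.transpose_apply]
      rw [e] at htr; exact htr
    ext i j
    have hnn : ∀ j ∈ Finset.univ, (0:ℝ) ≤ ∑ i, B i j * B i j := fun j _ =>
      Finset.sum_nonneg fun i _ => mul_self_nonneg _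
    have hj := (Finset.sum_eq_zero_iff_of_nonneg hnn).1 hsum j (Finset.mem_univ j)
    have hi := (Finset.sum_eq_zero_iff_of_nonneg
      (fun i _ => mul_self_nonneg (B i j))).1 hj i (Finset.mem_univ i)
    simpa [mul_self_eq_zero] using hi
  have hΔeq : Δ = U * (Uᵀ * Δ) + ((1 - P) * Δ * V) * Vᵀ := by
    conv_lhs => rw [hdecomp, hB0]
    rw [add_zero, hP, hQ]
    simp only [Matrix.mul_assoc]
  have hrank : Δ.rank ≤ 2 * r := by
    calc Δ.rank = (U * (Uᵀ * Δ) + ((1 - P) * Δ * V) * Vᵀ).rank := by rw [← hΔeq]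
      _ ≤ (U * (Uᵀ * Δ)).rank + (((1 - P) * Δ * V) * Vᵀ).rank := my_rank_add_le _ _
      _ ≤ r + r := by
          gcongr
          · exact (Matrix.rank_mul_le_left U (Uᵀ * Δ)).trans
              (U.rank_le_card_width.trans (by simp))
          · exact (Matrix.rank_mul_le_right ((1 - P) * Δ * V) Vᵀ).trans
              ((Vᵀ).rank_le_card_height.trans (by simp))
      _ = 2 * r := by ring
  refine ⟨hrank, ?_⟩
  set hH : (Δᵀ * Δ).IsHermitian := (by
    simpa using Matrix.isHermitian_conjTranspose_mul_self Δ) with hHdef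
  set ev : Fin d₂ → ℝ := hH.eigenvalues with hev
  have hev_nonneg : ∀ i, 0 ≤ ev i := fun i =>
    (Matrix.posSemidef_conjTranspose_mul_self Δ).eigenvalues_nonneg i
  have hcard : Fintype.card {i // ev i ≠ 0} = Δ.rank := by
    rw [← Matrix.rank_conjTranspose_mul_self Δ]
    exact (hH.rank_eq_card_non_zero_eigs).symm
  have hsum_ev : ∑ i, ev i = ∑ i, ∑ j, (Δ i j) ^ 2 := by
    rw [hev, ← my_trace_eq_sum_eigenvalues hH]
    rw [show (∑ i, ∑ j, (Δ i j) ^ 2) = ∑ j, ∑ i, (Δ i j) ^ 2 from Finset.sum_comm]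
    simp [Matrix.trace, Matrix.diag, Matrix.mul_apply, Matrix.conjTranspose_apply, sq]
  set t := Finset.univ.filter (fun i => ev i ≠ 0) with ht
  have hcard_filter : t.card ≤ 2 * r := by
    rw [Fintype.card_subtype] at hcard
    exact hcard ▸ hrank
  have hS_eq : ∑ i, Real.sqrt (ev i) = ∑ i ∈ t, Real.sqrt (ev i) := by
    refine (Finset.sum_filter_of_ne ?_).symm
    intro i _ h h0
    exact h (by rw [h0, Real.sqrt_zero])
  have hSigNonneg : (0:ℝ) ≤ ∑ i, ev i := Finset.sum_nonneg fun i _ => hev_nonneg i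
  have hsq : (∑ i ∈ t, Real.sqrt (ev i)) ^ 2 ≤ (t.card : ℝ) * ∑ i, ev i := by
    calc (∑ i ∈ t, Real.sqrt (ev i)) ^ 2
        ≤ (t.card : ℝ) * ∑ i ∈ t, Real.sqrt (ev i) ^ 2 := sq_sum_le_card_mul_sum_sq
      _ = (t.card : ℝ) * ∑ i ∈ t, ev i := by
          congr 1
          exact Finset.sum_congr rfl fun i _ => Real.sq_sqrt (hev_nonneg i)
      _ ≤ (t.card : ℝ) * ∑ i, ev i := by
          refine mul_le_mul_of_nonneg_left ?_ (Nat.cast_nonneg _)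
          exact Finset.sum_le_sum_of_subset_of_nonneg (Finset.filter_subset _ _)
            (fun i _ _ => hev_nonneg i)
  have hsq2 : (∑ i ∈ t, Real.sqrt (ev i)) ^ 2 ≤ (2 * r : ℝ) * ∑ i, ev i := by
    refine hsq.trans (mul_le_mul_of_nonneg_right ?_ hSigNonneg)
    exact_mod_cast hcard_filter
  have hS_nonneg : 0 ≤ ∑ i ∈ t, Real.sqrt (ev i) :=
    Finset.sum_nonneg fun i _ => Real.sqrt_nonneg _
  calc ∑ i, Real.sqrt (ev i) = ∑ i ∈ t, Real.sqrt (ev i) := hS_eq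
    _ = Real.sqrt ((∑ i ∈ t, Real.sqrt (ev i)) ^ 2) := (Real.sqrt_sq hS_nonneg).symm
    _ ≤ Real.sqrt ((2 * r : ℝ) * ∑ i, ev i) := Real.sqrt_le_sqrt hsq2
    _ = Real.sqrt (2 * r) * Real.sqrt (∑ i, ∑ j, (Δ i j) ^ 2) := by
        rw [Real.sqrt_mul (by positivity), hsum_ev]
end

section
/- The nuclear norm ‖·‖_N on R^{d₁×d₂} is decomposable with respect to the pair (M, M̄^⊥) associated with a rank-r matrix θ* = U^r D (V^r)ᵀ: for every A ∈ M := {θ : row(θ) ⊆ col(V^r), col(θ) ⊆ col(U^r)} and every B ∈ M̄^⊥ := {θ : row(θ) ⊥ col(V^r), col(θ) ⊥ col(U^r)}, one has ‖A + B‖_N = ‖A‖_N + ‖B‖_N. -/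
open Matrix

theorem Matrix.isHermitian_transpose_mul_self {α m n : Type*} [Fintype m] [NonUnitalSemiring α]
    [StarRing α] [TrivialStar α] (A : Matrix m n α) : (Aᵀ * A).IsHermitian := by
  rw [← conjTranspose_eq_transpose_of_trivial]
  exact isHermitian_conjTranspose_mul_self A

open scoped MatrixOrder in
noncomputable def Matrix.PosSemidef.sqrt {n : Type*} [Fintype n] [DecidableEq n] {M : Matrix n n ℝ}
    (_hM : M.PosSemidef) : Matrix n n ℝ := CFC.sqrt M

open scoped MatrixOrder in
theorem Matrix.PosSemidef.posSemidef_sqrt {n : Type*} [Fintype n] [DecidableEq n]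
    {M : Matrix n n ℝ} (hM : M.PosSemidef) : hM.sqrt.PosSemidef :=
  (CFC.sqrt_nonneg M).posSemidef

open scoped MatrixOrder in
theorem Matrix.PosSemidef.sqrt_mul_self {n : Type*} [Fintype n] [DecidableEq n]
    {M : Matrix n n ℝ} (hM : M.PosSemidef) : hM.sqrt * hM.sqrt = M :=
  CFC.sqrt_mul_sqrt_self M hM.nonneg

open scoped MatrixOrder in
theorem Matrix.PosSemidef.eq_sqrt_of_sq_eq {n : Type*} [Fintype n] [DecidableEq n]
    {M B : Matrix n n ℝ} (hB : B.PosSemidef) (h : B ^ 2 = M) :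
    B = CFC.sqrt M :=
  have hM : M.PosSemidef := h ▸ hB.pow 2
  ((CFC.sqrt_eq_iff M B hM.nonneg hB.nonneg).mpr (by rw [← sq, h])).symm

open scoped MatrixOrder in
theorem Matrix.PosSemidef.eq_of_sq_eq_sq {n : Type*} [Fintype n] [DecidableEq n]
    {A B : Matrix n n ℝ} (hA : A.PosSemidef) (hB : B.PosSemidef) (h : A ^ 2 = B ^ 2) : A = B :=
  (CFC.sq_eq_sq_iff A B hA.nonneg hB.nonneg).mp h

open scoped MatrixOrder in
private lemma nn_trace_sqrt {n : Type*} [Fintype n] [DecidableEq n] {M : Matrix n n ℝ}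
    (hM : M.PosSemidef) : hM.sqrt.trace = ∑ i, Real.sqrt (hM.1.eigenvalues i) := by
  rw [Matrix.PosSemidef.sqrt, CFC.sqrt_eq_cfc, cfc_nnreal_eq_real _ M, hM.1.cfc_eq,
    IsHermitian.cfc, Unitary.conjStarAlgAut_apply, Matrix.trace_mul_cycle]
  have h1 : (star hM.1.eigenvectorUnitary : Matrix n n ℝ) * hM.1.eigenvectorUnitary.1 = 1 := by
    simpa using hM.1.eigenvectorUnitary.2.1
  rw [h1, Matrix.one_mul, Matrix.trace_diagonal]
  simp [hM.eigenvalues_nonneg]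

private lemma nn_sqrt_congr {n : Type*} [Fintype n] [DecidableEq n] {M N : Matrix n n ℝ}
    (h : M = N) (hM : M.PosSemidef) (hN : N.PosSemidef) : hM.sqrt = hN.sqrt := by
  subst h; rfl

private lemma nn_sqrt_mul_sqrt_eq_zero {n : Type*} [Fintype n] [DecidableEq n]
    {M N : Matrix n n ℝ} (hM : M.PosSemidef) (hN : N.PosSemidef) (h : M * N = 0) :
    hM.sqrt * hN.sqrt = 0 := by
  set X := hM.sqrt * hN.sqrt with hX
  have hXX : Xᴴ * X = hN.sqrt * M * hN.sqrt := by
    rw [hX, conjTranspose_mul, hM.posSemidef_sqrt.1, hN.posSemidef_sqrt.1]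
    calc hN.sqrt * hM.sqrt * (hM.sqrt * hN.sqrt)
        = hN.sqrt * (hM.sqrt * hM.sqrt) * hN.sqrt := by noncomm_ring
      _ = hN.sqrt * M * hN.sqrt := by rw [hM.sqrt_mul_self]
  have hsq : (Xᴴ * X) ^ 2 = (0 : Matrix n n ℝ) ^ 2 := by
    rw [hXX]
    calc (hN.sqrt * M * hN.sqrt) ^ 2
        = hN.sqrt * M * (hN.sqrt * hN.sqrt) * M * hN.sqrt := by noncomm_ring
      _ = hN.sqrt * (M * N * M) * hN.sqrt := by rw [hN.sqrt_mul_self]; noncomm_ring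
      _ = 0 ^ 2 := by rw [h]; simp
  have hpsd : (Xᴴ * X).PosSemidef := Matrix.posSemidef_conjTranspose_mul_self X
  have h0 : Xᴴ * X = 0 := hpsd.eq_of_sq_eq_sq Matrix.PosSemidef.zero hsq
  exact Matrix.conjTranspose_mul_self_eq_zero.mp h0

/-- if `M * N = 0` and both PSD, then `∑√eig(M+N) = ∑√eig M + ∑√eig N`. -/
private lemma nn_key {n : Type*} [Fintype n] [DecidableEq n] {M N : Matrix n n ℝ}
    (hM : M.PosSemidef) (hN : N.PosSemidef) (h : M * N = 0) (hMN : (M + N).PosSemidef) :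
    (∑ i, Real.sqrt (hMN.1.eigenvalues i)) =
      (∑ i, Real.sqrt (hM.1.eigenvalues i)) + ∑ i, Real.sqrt (hN.1.eigenvalues i) := by
  have h' : N * M = 0 := by
    have := congrArg Matrix.conjTranspose h
    rwa [conjTranspose_mul, hM.1, hN.1, conjTranspose_zero] at this
  have hadd : hMN.sqrt = hM.sqrt + hN.sqrt := by
    symm
    apply Matrix.PosSemidef.eq_sqrt_of_sq_eq (hM.posSemidef_sqrt.add hN.posSemidef_sqrt)
    have e1 := nn_sqrt_mul_sqrt_eq_zero hM hN h
    have e2 := nn_sqrt_mul_sqrt_eq_zero hN hM h'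
    calc (hM.sqrt + hN.sqrt) ^ 2
        = hM.sqrt * hM.sqrt + (hM.sqrt * hN.sqrt + hN.sqrt * hM.sqrt) + hN.sqrt * hN.sqrt := by
          noncomm_ring
      _ = M + N := by rw [e1, e2, hM.sqrt_mul_self, hN.sqrt_mul_self]; simp
  rw [← nn_trace_sqrt hMN, ← nn_trace_sqrt hM, ← nn_trace_sqrt hN, hadd, Matrix.trace_add]

/-- Decomposability of the nuclear norm: if `A` has column space contained in `col(U)`
and row space contained in `col(V)`, while `B` has column space orthogonal to `col(U)`
and row space orthogonal to `col(V)` (with `U, V` the singular factors of a rank-`r`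
matrix `θ* = U D Vᵀ`), then `‖A + B‖_N = ‖A‖_N + ‖B‖_N`. -/
theorem stmt11 {d₁ d₂ r : ℕ}
    (U : Matrix (Fin d₁) (Fin r) ℝ) (V : Matrix (Fin d₂) (Fin r) ℝ)
    (D : Matrix (Fin r) (Fin r) ℝ)
    (hU : Uᵀ * U = 1) (hV : Vᵀ * V = 1)
    (θs : Matrix (Fin d₁) (Fin d₂) ℝ) (hθs : θs = U * D * Vᵀ)
    (A B : Matrix (Fin d₁) (Fin d₂) ℝ)
    (hA_col : LinearMap.range (Matrix.toLin' A) ≤ LinearMap.range (Matrix.toLin' U))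
    (hA_row : LinearMap.range (Matrix.toLin' Aᵀ) ≤ LinearMap.range (Matrix.toLin' V))
    (hB_col : ∀ (x : Fin d₂ → ℝ) (y : Fin r → ℝ),
      dotProduct (B.mulVec x) (U.mulVec y) = 0)
    (hB_row : ∀ (x : Fin d₁ → ℝ) (y : Fin r → ℝ),
      dotProduct (Bᵀ.mulVec x) (V.mulVec y) = 0) :
    (∑ i, Real.sqrt ((Matrix.isHermitian_transpose_mul_self (A + B)).eigenvalues i)) =
      (∑ i, Real.sqrt ((Matrix.isHermitian_transpose_mul_self A).eigenvalues i)) +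
      (∑ i, Real.sqrt ((Matrix.isHermitian_transpose_mul_self B).eigenvalues i)) := by
  -- Uᵀ * B = 0
  have hUB : Uᵀ * B = 0 := by
    ext k j
    have := hB_col (Pi.single j 1) (Pi.single k 1)
    simp only [dotProduct, Matrix.mulVec_single, mul_one] at this
    simpa [Matrix.mul_apply, Matrix.transpose_apply, mul_comm] using this
  -- Vᵀ * Bᵀ = 0
  have hVB : Vᵀ * Bᵀ = 0 := by
    ext k j
    have := hB_row (Pi.single j 1) (Pi.single k 1)
    simp only [dotProduct, Matrix.mulVec_single, mul_one] at this
    simpa [Matrix.mul_apply, Matrix.transpose_apply, mul_comm] using this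
  -- A = U * Uᵀ * A
  have hAc : U * Uᵀ * A = A := by
    apply Matrix.toLin'.injective
    apply LinearMap.ext
    intro v
    obtain ⟨y, hy⟩ := hA_col (LinearMap.mem_range_self (Matrix.toLin' A) v)
    simp only [Matrix.toLin'_apply, ← Matrix.mulVec_mulVec] at hy ⊢
    rw [← hy, Matrix.mulVec_mulVec y Uᵀ U, hU, Matrix.one_mulVec]
  -- Aᵀ = V * Vᵀ * Aᵀ
  have hAr : V * Vᵀ * Aᵀ = Aᵀ := by
    apply Matrix.toLin'.injective
    apply LinearMap.ext
    intro v
    obtain ⟨y, hy⟩ := hA_row (LinearMap.mem_range_self (Matrix.toLin' Aᵀ) v)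
    simp only [Matrix.toLin'_apply, ← Matrix.mulVec_mulVec] at hy ⊢
    rw [← hy, Matrix.mulVec_mulVec y Vᵀ V, hV, Matrix.one_mulVec]
  -- cross terms
  have hAB : Aᵀ * B = 0 := by
    calc Aᵀ * B = (U * Uᵀ * A)ᵀ * B := by rw [hAc]
      _ = Aᵀ * U * (Uᵀ * B) := by
          rw [Matrix.transpose_mul, Matrix.transpose_mul, Matrix.transpose_transpose]
          simp [Matrix.mul_assoc]
      _ = 0 := by rw [hUB, Matrix.mul_zero]
  have hBA : Bᵀ * A = 0 := by
    have := congrArg Matrix.transpose hAB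
    rwa [Matrix.transpose_mul, Matrix.transpose_transpose, Matrix.transpose_zero] at this
  have hABt : A * Bᵀ = 0 := by
    calc A * Bᵀ = (V * Vᵀ * Aᵀ)ᵀ * Bᵀ := by rw [hAr, Matrix.transpose_transpose]
      _ = A * V * (Vᵀ * Bᵀ) := by
          rw [Matrix.transpose_mul, Matrix.transpose_mul, Matrix.transpose_transpose,
            Matrix.transpose_transpose]
          simp [Matrix.mul_assoc]
      _ = 0 := by rw [hVB, Matrix.mul_zero]
  -- PSD facts
  have hM : (Aᵀ * A).PosSemidef := by
    simpa using Matrix.posSemidef_conjTranspose_mul_self A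
  have hN : (Bᵀ * B).PosSemidef := by
    simpa using Matrix.posSemidef_conjTranspose_mul_self B
  have hMN0 : (Aᵀ * A) * (Bᵀ * B) = 0 := by
    calc (Aᵀ * A) * (Bᵀ * B) = Aᵀ * (A * Bᵀ) * B := by simp [Matrix.mul_assoc]
      _ = 0 := by rw [hABt]; simp
  have hSum : (A + B)ᵀ * (A + B) = Aᵀ * A + Bᵀ * B := by
    rw [Matrix.transpose_add, Matrix.add_mul, Matrix.mul_add, Matrix.mul_add, hAB, hBA]
    simp
  have hP : ((A + B)ᵀ * (A + B)).PosSemidef := by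
    simpa using Matrix.posSemidef_conjTranspose_mul_self (A + B)
  have hP' : ((Aᵀ * A) + (Bᵀ * B)).PosSemidef := hSum ▸ hP
  have key := nn_key hM hN hMN0 hP'
  calc (∑ i, Real.sqrt ((Matrix.isHermitian_transpose_mul_self (A + B)).eigenvalues i))
      = hP.sqrt.trace := (nn_trace_sqrt hP).symm
    _ = hP'.sqrt.trace := by rw [nn_sqrt_congr hSum hP hP']
    _ = (∑ i, Real.sqrt (hM.1.eigenvalues i)) + ∑ i, Real.sqrt (hN.1.eigenvalues i) := by
        rw [nn_trace_sqrt hP', key]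
    _ = _ := rfl
end

section
/- Let L : R^p → R be convex and differentiable, R a norm with dual norm R*, λ_P > 0 and λ_Q ≥ λ_P + R*(∇L(θ'₀)) for a fixed θ'₀ ∈ R^p. Then for every δ ∈ R^p, L(θ'₀ − δ) + λ_P R(θ'₀ − δ) + λ_Q R(δ) ≥ L(θ'₀) + λ_P R(θ'₀); hence δ = 0 is a global minimizer of δ ↦ L(θ'₀ − δ) + λ_P R(θ'₀ − δ) + λ_Q R(δ). -/
open scoped RealInnerProductSpace

lemma abs_apply_le_norm_aux {p : ℕ} (x : EuclideanSpace ℝ (Fin p)) (i : Fin p) :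
    |x i| ≤ ‖x‖ := by
  have h1 : ⟪EuclideanSpace.single i (1:ℝ), x⟫ = x i := by
    simp [EuclideanSpace.inner_single_left]
  have h2 := abs_real_inner_le_norm (EuclideanSpace.single i (1:ℝ)) x
  rw [h1, EuclideanSpace.norm_single] at h2
  simpa using h2

lemma eq_sum_single_aux {p : ℕ} (x : EuclideanSpace ℝ (Fin p)) :
    x = ∑ i, x i • EuclideanSpace.single i (1:ℝ) := by
  have h := (EuclideanSpace.basisFun (Fin p) ℝ).sum_repr x
  simp only [EuclideanSpace.basisFun_repr, EuclideanSpace.basisFun_apply] at h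
  exact h.symm

/-- If `λ_Q ≥ λ_P + R*(∇L(θ'₀))`, then for every `δ`,
`L(θ'₀ − δ) + λ_P R(θ'₀ − δ) + λ_Q R(δ) ≥ L(θ'₀) + λ_P R(θ'₀)`; hence `δ = 0` is a
global minimizer of `δ ↦ L(θ'₀ − δ) + λ_P R(θ'₀ − δ) + λ_Q R(δ)`. -/
theorem stmt17 {p : ℕ}
    (L : EuclideanSpace ℝ (Fin p) → ℝ)
    (hL_convex : ConvexOn ℝ Set.univ L)
    (hL_diff : Differentiable ℝ L)
    (R Rstar : EuclideanSpace ℝ (Fin p) → ℝ)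
    (hR_nonneg : ∀ x, 0 ≤ R x)
    (hR_add : ∀ x y, R (x + y) ≤ R x + R y)
    (hR_smul : ∀ (c : ℝ) (x : EuclideanSpace ℝ (Fin p)), R (c • x) = |c| * R x)
    (hR_def : ∀ x, R x = 0 → x = 0)
    (hRstar : ∀ v, Rstar v = sSup {y | ∃ u, R u ≤ 1 ∧ y = ⟪u, v⟫})
    (θ0 : EuclideanSpace ℝ (Fin p))
    (lamP lamQ : ℝ) (hlamP : 0 < lamP)
    (hlamQ : lamP + Rstar (gradient L θ0) ≤ lamQ) :
    (∀ δ : EuclideanSpace ℝ (Fin p),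
      L θ0 + lamP * R θ0 ≤ L (θ0 - δ) + lamP * R (θ0 - δ) + lamQ * R δ) ∧
    (∀ δ : EuclideanSpace ℝ (Fin p),
      L (θ0 - 0) + lamP * R (θ0 - 0) + lamQ * R 0 ≤
        L (θ0 - δ) + lamP * R (θ0 - δ) + lamQ * R δ) := by
  set g := gradient L θ0 with hg
  -- basic facts about R
  have hR0 : R 0 = 0 := by
    have := hR_smul 0 0
    simpa using this
  have hRpos : ∀ x : EuclideanSpace ℝ (Fin p), x ≠ 0 → 0 < R x := by
    intro x hx
    rcases lt_or_eq_of_le (hR_nonneg x) with h | h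
    · exact h
    · exact absurd (hR_def x h.symm) hx
  -- R of a finite sum
  have hR_sum : ∀ (s : Finset (Fin p)) (f : Fin p → EuclideanSpace ℝ (Fin p)),
      R (∑ i ∈ s, f i) ≤ ∑ i ∈ s, R (f i) := by
    intro s f
    induction s using Finset.cons_induction with
    | empty => simp [hR0]
    | cons a s ha ih =>
      rw [Finset.sum_cons, Finset.sum_cons]
      exact le_trans (hR_add _ _) (by linarith)
  -- upper bound : R x ≤ C * ‖x‖
  set C : ℝ := ∑ i, R (EuclideanSpace.single i (1:ℝ)) with hC
  have hupper : ∀ x, R x ≤ C * ‖x‖ := by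
    intro x
    calc R x = R (∑ i, x i • EuclideanSpace.single i (1:ℝ)) := by
          rw [← eq_sum_single_aux]
      _ ≤ ∑ i, R (x i • EuclideanSpace.single i (1:ℝ)) := hR_sum _ _
      _ = ∑ i, |x i| * R (EuclideanSpace.single i (1:ℝ)) := by
          simp [hR_smul]
      _ ≤ ∑ i, ‖x‖ * R (EuclideanSpace.single i (1:ℝ)) := by
          refine Finset.sum_le_sum fun i _ => ?_
          exact mul_le_mul_of_nonneg_right (abs_apply_le_norm_aux x i) (hR_nonneg _)
      _ = C * ‖x‖ := by rw [hC, Finset.sum_mul]; simp [mul_comm]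
  have hCnn : 0 ≤ C := Finset.sum_nonneg fun i _ => hR_nonneg _
  -- R is Lipschitz, hence continuous
  have hRneg : ∀ x, R (-x) = R x := by
    intro x
    have := hR_smul (-1) x
    simpa using this
  have hRcont : Continuous R := by
    apply LipschitzWith.continuous (K := ⟨C, hCnn⟩)
    refine LipschitzWith.of_dist_le_mul fun x y => ?_
    rw [Real.dist_eq, dist_eq_norm]
    change |R x - R y| ≤ C * ‖x - y‖
    have h1 : R x - R y ≤ R (x - y) := by
      have := hR_add (x - y) y; simp at this; linarith
    have h2 : R y - R x ≤ R (x - y) := by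
      have h := hR_add (y - x) x
      simp at h
      have : R (y - x) = R (x - y) := by
        rw [show y - x = -(x - y) by abel, hRneg]
      linarith
    have h3 := hupper (x - y)
    rw [abs_sub_le_iff]
    constructor <;> [linarith; linarith]
  -- the dual-norm bound : ⟪g, δ⟫ ≤ Rstar g * R δ
  have hmain : ∀ δ : EuclideanSpace ℝ (Fin p), ⟪g, δ⟫ ≤ Rstar g * R δ := by
    intro δ
    by_cases hδ : δ = 0
    · simp [hδ, hR0]
    · -- lower bound: m * ‖x‖ ≤ R x
      have hδn : (0:ℝ) < ‖δ‖ := norm_pos_iff.2 hδ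
      have hsphere : (Metric.sphere (0:EuclideanSpace ℝ (Fin p)) 1).Nonempty := by
        refine ⟨‖δ‖⁻¹ • δ, ?_⟩
        simp [norm_smul, abs_of_pos (inv_pos.2 hδn), inv_mul_cancel₀ hδn.ne']
      obtain ⟨x₀, hx₀mem, hx₀min⟩ :=
        (isCompact_sphere (0:EuclideanSpace ℝ (Fin p)) 1).exists_isMinOn hsphere
          hRcont.continuousOn
      have hx₀ne : x₀ ≠ 0 := by
        intro h
        rw [h] at hx₀mem
        simp at hx₀mem
      have hm : 0 < R x₀ := hRpos _ hx₀ne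
      set m := R x₀ with hmdef
      have hlow : ∀ x : EuclideanSpace ℝ (Fin p), m * ‖x‖ ≤ R x := by
        intro x
        by_cases hx : x = 0
        · simp [hx, hR0]
        · have hxn : (0:ℝ) < ‖x‖ := norm_pos_iff.2 hx
          have hmem : ‖x‖⁻¹ • x ∈ Metric.sphere (0:EuclideanSpace ℝ (Fin p)) 1 := by
            simp [norm_smul, abs_of_pos (inv_pos.2 hxn), inv_mul_cancel₀ hxn.ne']
          have h := hx₀min hmem
          simp only [Set.mem_setOf_eq] at h
          rw [hR_smul, abs_inv, abs_norm] at h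
          have h' : m * ‖x‖ ≤ (‖x‖⁻¹ * R x) * ‖x‖ :=
            mul_le_mul_of_nonneg_right h hxn.le
          have h'' : (‖x‖⁻¹ * R x) * ‖x‖ = R x := by field_simp
          linarith
      -- the set in the definition of Rstar is bounded above
      have hbdd : BddAbove {y | ∃ u, R u ≤ 1 ∧ y = ⟪u, g⟫} := by
        refine ⟨‖g‖ / m, ?_⟩
        rintro y ⟨u, hu, rfl⟩
        have h1 : ⟪u, g⟫ ≤ ‖u‖ * ‖g‖ := real_inner_le_norm u g
        have h2 : ‖u‖ ≤ 1 / m := by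
          rw [le_div_iff₀ hm]
          have := hlow u
          linarith [mul_comm m ‖u‖]
        calc ⟪u, g⟫ ≤ ‖u‖ * ‖g‖ := h1
          _ ≤ (1 / m) * ‖g‖ := mul_le_mul_of_nonneg_right h2 (norm_nonneg g)
          _ = ‖g‖ / m := by ring
      have hRδ : 0 < R δ := hRpos δ hδ
      have humem : ((R δ)⁻¹ * ⟪δ, g⟫) ∈ {y | ∃ u, R u ≤ 1 ∧ y = ⟪u, g⟫} := by
        refine ⟨(R δ)⁻¹ • δ, ?_, ?_⟩
        · rw [hR_smul, abs_inv, abs_of_pos hRδ, inv_mul_cancel₀ hRδ.ne']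
        · rw [real_inner_smul_left]
      have hle : (R δ)⁻¹ * ⟪δ, g⟫ ≤ Rstar g := by
        rw [hRstar]
        exact le_csSup hbdd humem
      have h3 : ⟪δ, g⟫ ≤ Rstar g * R δ := by
        have h4 := mul_le_mul_of_nonneg_right hle hRδ.le
        have h5 : (R δ)⁻¹ * ⟪δ, g⟫ * R δ = ⟪δ, g⟫ := by
          field_simp
        linarith
      rwa [real_inner_comm]
  -- connection between gradient and fderiv
  have hinner : ∀ w : EuclideanSpace ℝ (Fin p), ⟪g, w⟫ = fderiv ℝ L θ0 w := by
    intro w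
    rw [hg, gradient, ← InnerProductSpace.toDual_apply_apply,
      LinearIsometryEquiv.apply_symm_apply]
  -- convexity : L θ0 ≤ L (θ0 - δ) + ⟪g, δ⟫
  have hconv : ∀ δ : EuclideanSpace ℝ (Fin p), L θ0 ≤ L (θ0 - δ) + ⟪g, δ⟫ := by
    intro δ
    set w := -δ with hw
    set φ : ℝ → ℝ := fun t => L (θ0 + t • w) with hφ
    have hφconv : ConvexOn ℝ Set.univ φ := by
      have h := hL_convex.comp_affineMap
        (AffineMap.lineMap θ0 (θ0 + w) : ℝ →ᵃ[ℝ] EuclideanSpace ℝ (Fin p))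
      have heq : (L ∘ (AffineMap.lineMap θ0 (θ0 + w) : ℝ →ᵃ[ℝ] EuclideanSpace ℝ (Fin p))) = φ := by
        funext t
        simp [hφ, AffineMap.lineMap_apply, add_comm]
      have hset : (AffineMap.lineMap θ0 (θ0 + w) : ℝ →ᵃ[ℝ] EuclideanSpace ℝ (Fin p)) ⁻¹'
          Set.univ = Set.univ := by simp
      rw [heq, hset] at h
      exact h
    have hder : HasDerivAt φ (fderiv ℝ L θ0 w) 0 := by
      have h1 : HasDerivAt (fun t : ℝ => θ0 + t • w) w 0 := by
        simpa using ((hasDerivAt_id (0:ℝ)).smul_const w).const_add θ0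
      have h2 : HasFDerivAt L (fderiv ℝ L θ0) ((fun t : ℝ => θ0 + t • w) 0) := by
        simpa using (hL_diff θ0).hasFDerivAt
      exact h2.comp_hasDerivAt 0 h1
    have hdiff : DifferentiableAt ℝ φ 0 := hder.differentiableAt
    have hslope := hφconv.deriv_le_slope (Set.mem_univ (0:ℝ)) (Set.mem_univ (1:ℝ))
      one_pos hdiff
    rw [hder.deriv, slope_def_field] at hslope
    have hφ1 : φ 1 = L (θ0 - δ) := by simp [hφ, hw, sub_eq_add_neg]
    have hφ0 : φ 0 = L θ0 := by simp [hφ]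
    have hiw : fderiv ℝ L θ0 w = -⟪g, δ⟫ := by
      rw [← hinner w, hw, inner_neg_right]
    rw [hφ1, hφ0, hiw] at hslope
    rw [show (1:ℝ) - 0 = 1 by norm_num, div_one] at hslope
    linarith
  -- triangle inequality for R
  have hRtri : ∀ δ : EuclideanSpace ℝ (Fin p), R θ0 ≤ R (θ0 - δ) + R δ := by
    intro δ
    have := hR_add (θ0 - δ) δ
    simpa using this
  have hmain2 : ∀ δ : EuclideanSpace ℝ (Fin p),
      L θ0 + lamP * R θ0 ≤ L (θ0 - δ) + lamP * R (θ0 - δ) + lamQ * R δ := by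
    intro δ
    have h1 := hconv δ
    have h2 := hmain δ
    have h3 := mul_le_mul_of_nonneg_left (hRtri δ) hlamP.le
    have h4 : (lamP + Rstar g) * R δ ≤ lamQ * R δ :=
      mul_le_mul_of_nonneg_right hlamQ (hR_nonneg δ)
    nlinarith [hR_nonneg δ]
  refine ⟨hmain2, fun δ => ?_⟩
  have := hmain2 δ
  simpa [hR0] using this
end
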